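/- The feasible set of the indirect certainty-equivalence LQR problem and the feasible set S of the covariance-parameterized LQR problem are in bijective correspondence under the change of variables V = Φ⁻¹[Kᵀ, Iₙ]ᵀ: K is feasible for the certainty-equivalence problem (i.e. ρ(Â + B̂K) < 1) if and only if V := Φ⁻¹[Kᵀ, Iₙ]ᵀ ∈ S, in which case the two costs coincide, i.e. C_CE(K) = J(V). Consequently the optimal values coincide: J* = C_CE*. -/

import Mathlib

open Matrix
noncomputable section

/-- Euclidean norm of a vector. -/
def eNorm {ι : Type*} [Fintype ι] (v : ι → ℝ) : ℝ :=
  Real.sqrt (∑ i, v i ^ 2)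

/-- Frobenius norm of a matrix. -/
def frobNorm {ι κ : Type*} [Fintype ι] [Fintype κ] (A : Matrix ι κ ℝ) : ℝ :=
  Real.sqrt (∑ i, ∑ j, A i j ^ 2)

/-- Spectral (operator 2-) norm of a matrix. -/
def spNorm {ι κ : Type*} [Fintype ι] [Fintype κ] (A : Matrix ι κ ℝ) : ℝ :=
  sSup {r : ℝ | ∃ v : κ → ℝ, eNorm v = 1 ∧ r = eNorm (A.mulVec v)}

/-- Smallest singular value of a matrix `A`, i.e. the square root of the smallest
eigenvalue of `A * Aᵀ`, expressed as `inf_{‖u‖ = 1} ‖Aᵀ u‖`. -/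
def sigMin {ι κ : Type*} [Fintype ι] [Fintype κ] (A : Matrix ι κ ℝ) : ℝ :=
  sInf {r : ℝ | ∃ u : ι → ℝ, eNorm u = 1 ∧ r = eNorm (A.vecMul u)}

/-- `ρ(A) < 1` : the spectral radius of the real square matrix `A` (i.e. the
largest modulus of a complex eigenvalue) is smaller than one. -/
def specLt1 {ι : Type*} [Fintype ι] [DecidableEq ι] (A : Matrix ι ι ℝ) : Prop :=
  spectralRadius ℂ (A.map Complex.ofReal) < 1

/-- Right inverse `M† = Mᵀ (M Mᵀ)⁻¹` of a full-row-rank matrix. -/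
def pinv {ι κ : Type*} [Fintype ι] [Fintype κ] [DecidableEq ι] (A : Matrix ι κ ℝ) :
    Matrix κ ι ℝ :=
  Aᵀ * (A * Aᵀ)⁻¹

/-- Orthogonal projection `Π_A = I - A† A` onto the nullspace of `A`. -/
def projNull {ι κ : Type*} [Fintype ι] [Fintype κ] [DecidableEq ι] [DecidableEq κ]
    (A : Matrix ι κ ℝ) : Matrix κ κ ℝ :=
  1 - pinv A * A

/-- `Σ(M) = ∑_{i≥0} Mⁱ (Mᵀ)ⁱ`, the unique solution of the discrete Lyapunov
equation `Σ = I + M Σ Mᵀ` when `ρ(M) < 1`. -/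
def lyap {k : ℕ} (M : Matrix (Fin k) (Fin k) ℝ) : Matrix (Fin k) (Fin k) ℝ :=
  ∑' i : ℕ, M ^ i * (Mᵀ) ^ i

variable {n m t : ℕ}

/-- Stacked data matrix `D₀ = [U₀; X₀]`. -/
def Dmat (U0 : Matrix (Fin m) (Fin t) ℝ) (X0 : Matrix (Fin n) (Fin t) ℝ) :
    Matrix (Fin m ⊕ Fin n) (Fin t) ℝ :=
  Matrix.fromRows U0 X0

/-- `Ū₀ = (1/t) U₀ D₀ᵀ`. -/
def Ubar (U0 : Matrix (Fin m) (Fin t) ℝ) (X0 : Matrix (Fin n) (Fin t) ℝ) :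
    Matrix (Fin m) (Fin m ⊕ Fin n) ℝ :=
  (t : ℝ)⁻¹ • (U0 * (Dmat U0 X0)ᵀ)

/-- `X̄₀ = (1/t) X₀ D₀ᵀ`. -/
def Xbar0 (U0 : Matrix (Fin m) (Fin t) ℝ) (X0 : Matrix (Fin n) (Fin t) ℝ) :
    Matrix (Fin n) (Fin m ⊕ Fin n) ℝ :=
  (t : ℝ)⁻¹ • (X0 * (Dmat U0 X0)ᵀ)

/-- `X̄₁ = (1/t) X₁ D₀ᵀ`. -/
def Xbar1 (U0 : Matrix (Fin m) (Fin t) ℝ) (X0 X1 : Matrix (Fin n) (Fin t) ℝ) :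
    Matrix (Fin n) (Fin m ⊕ Fin n) ℝ :=
  (t : ℝ)⁻¹ • (X1 * (Dmat U0 X0)ᵀ)

/-- Sample covariance `Φ = (1/t) D₀ D₀ᵀ`. -/
def Phi (U0 : Matrix (Fin m) (Fin t) ℝ) (X0 : Matrix (Fin n) (Fin t) ℝ) :
    Matrix (Fin m ⊕ Fin n) (Fin m ⊕ Fin n) ℝ :=
  (t : ℝ)⁻¹ • (Dmat U0 X0 * (Dmat U0 X0)ᵀ)

/-- The feasible set `S = {V : X̄₀ V = I, ρ(X̄₁ V) < 1}`. -/
def feasSet (U0 : Matrix (Fin m) (Fin t) ℝ) (X0 X1 : Matrix (Fin n) (Fin t) ℝ) :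
    Set (Matrix (Fin m ⊕ Fin n) (Fin n) ℝ) :=
  {V | Xbar0 U0 X0 * V = 1 ∧ specLt1 (Xbar1 U0 X0 X1 * V)}

/-- The closed-loop Lyapunov solution `Σ_V`, i.e. the unique solution of
`Σ_V = I + (X̄₁ V) Σ_V (X̄₁ V)ᵀ` when `V ∈ S`. -/
def SigV (U0 : Matrix (Fin m) (Fin t) ℝ) (X0 X1 : Matrix (Fin n) (Fin t) ℝ)
    (V : Matrix (Fin m ⊕ Fin n) (Fin n) ℝ) : Matrix (Fin n) (Fin n) ℝ :=
  lyap (Xbar1 U0 X0 X1 * V)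

/-- `P_V`, the unique solution of `P = Q + Vᵀ Ū₀ᵀ R Ū₀ V + (X̄₁V)ᵀ P (X̄₁V)`
when `V ∈ S`, given by its convergent series. -/
def PV (U0 : Matrix (Fin m) (Fin t) ℝ) (X0 X1 : Matrix (Fin n) (Fin t) ℝ)
    (Q : Matrix (Fin n) (Fin n) ℝ) (R : Matrix (Fin m) (Fin m) ℝ)
    (V : Matrix (Fin m ⊕ Fin n) (Fin n) ℝ) : Matrix (Fin n) (Fin n) ℝ :=
  ∑' i : ℕ, ((Xbar1 U0 X0 X1 * V)ᵀ) ^ i *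
      (Q + Vᵀ * (Ubar U0 X0)ᵀ * R * Ubar U0 X0 * V) * (Xbar1 U0 X0 X1 * V) ^ i

/-- The covariance-parameterized LQR cost `J(V)`. -/
def Jcost (U0 : Matrix (Fin m) (Fin t) ℝ) (X0 X1 : Matrix (Fin n) (Fin t) ℝ)
    (Q : Matrix (Fin n) (Fin n) ℝ) (R : Matrix (Fin m) (Fin m) ℝ)
    (V : Matrix (Fin m ⊕ Fin n) (Fin n) ℝ) : ℝ :=
  Matrix.trace ((Q + Vᵀ * (Ubar U0 X0)ᵀ * R * Ubar U0 X0 * V) * SigV U0 X0 X1 V)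

/-- `J* = inf_{V ∈ S} J(V)`. -/
def Jstar (U0 : Matrix (Fin m) (Fin t) ℝ) (X0 X1 : Matrix (Fin n) (Fin t) ℝ)
    (Q : Matrix (Fin n) (Fin n) ℝ) (R : Matrix (Fin m) (Fin m) ℝ) : ℝ :=
  sInf (Jcost U0 X0 X1 Q R '' feasSet U0 X0 X1)

/-- Sublevel set `S(a) = {V ∈ S : J(V) ≤ a}`. -/
def subLevel (U0 : Matrix (Fin m) (Fin t) ℝ) (X0 X1 : Matrix (Fin n) (Fin t) ℝ)
    (Q : Matrix (Fin n) (Fin n) ℝ) (R : Matrix (Fin m) (Fin m) ℝ) (a : ℝ) :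
    Set (Matrix (Fin m ⊕ Fin n) (Fin n) ℝ) :=
  {V | V ∈ feasSet U0 X0 X1 ∧ Jcost U0 X0 X1 Q R V ≤ a}

/-- The gradient `∇J(V) = 2 (Ū₀ᵀ R Ū₀ + X̄₁ᵀ P_V X̄₁) V Σ_V`. -/
def gradJ (U0 : Matrix (Fin m) (Fin t) ℝ) (X0 X1 : Matrix (Fin n) (Fin t) ℝ)
    (Q : Matrix (Fin n) (Fin n) ℝ) (R : Matrix (Fin m) (Fin m) ℝ)
    (V : Matrix (Fin m ⊕ Fin n) (Fin n) ℝ) : Matrix (Fin m ⊕ Fin n) (Fin n) ℝ :=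
  (2 : ℝ) • (((Ubar U0 X0)ᵀ * R * Ubar U0 X0 +
      (Xbar1 U0 X0 X1)ᵀ * PV U0 X0 X1 Q R V * Xbar1 U0 X0 X1) * V * SigV U0 X0 X1 V)

/-- `ξ(a) = ‖Ū₀‖² ‖R‖ + ‖X̄₁‖² a`. -/
def xiC (U0 : Matrix (Fin m) (Fin t) ℝ) (X0 X1 : Matrix (Fin n) (Fin t) ℝ)
    (R : Matrix (Fin m) (Fin m) ℝ) (a : ℝ) : ℝ :=
  spNorm (Ubar U0 X0) ^ 2 * spNorm R + spNorm (Xbar1 U0 X0 X1) ^ 2 * a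

/-- Smoothness constant `l(a)`. -/
def lC (U0 : Matrix (Fin m) (Fin t) ℝ) (X0 X1 : Matrix (Fin n) (Fin t) ℝ)
    (Q : Matrix (Fin n) (Fin n) ℝ) (R : Matrix (Fin m) (Fin m) ℝ) (a : ℝ) : ℝ :=
  4 * a ^ 2 * (xiC U0 X0 X1 R a + a - sigMin Q) * frobNorm (Xbar1 U0 X0 X1) ^ 2 / sigMin Q ^ 2 +
    2 * xiC U0 X0 X1 R a * a / sigMin Q

/-- Gradient-dominance constant `μ(a) = 4a²/(σ̲(Q)^{3/2} σ̲(R)^{1/2} σ̲(Ū₀))`. -/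
def muC (U0 : Matrix (Fin m) (Fin t) ℝ) (X0 : Matrix (Fin n) (Fin t) ℝ)
    (Q : Matrix (Fin n) (Fin n) ℝ) (R : Matrix (Fin m) (Fin m) ℝ) (a : ℝ) : ℝ :=
  4 * a ^ 2 / (Real.sqrt (sigMin Q) ^ 3 * Real.sqrt (sigMin R) * sigMin (Ubar U0 X0))

/-- Reparameterized cost `f(L, Σ) = Tr(QΣ) + Tr(L Σ⁻¹ Lᵀ Ū₀ᵀ R Ū₀)`. -/
def fRep (U0 : Matrix (Fin m) (Fin t) ℝ) (X0 : Matrix (Fin n) (Fin t) ℝ)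
    (Q : Matrix (Fin n) (Fin n) ℝ) (R : Matrix (Fin m) (Fin m) ℝ)
    (L : Matrix (Fin m ⊕ Fin n) (Fin n) ℝ) (Sg : Matrix (Fin n) (Fin n) ℝ) : ℝ :=
  Matrix.trace (Q * Sg) + Matrix.trace (L * Sg⁻¹ * Lᵀ * (Ubar U0 X0)ᵀ * R * Ubar U0 X0)

/-- Feasible set `ℒ` of the convex reparameterization. -/
def repSet (U0 : Matrix (Fin m) (Fin t) ℝ) (X0 X1 : Matrix (Fin n) (Fin t) ℝ) :
    Set (Matrix (Fin m ⊕ Fin n) (Fin n) ℝ × Matrix (Fin n) (Fin n) ℝ) :=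
  {p | p.2.IsSymm ∧ p.2 = Xbar0 U0 X0 * p.1 ∧
    (Matrix.fromBlocks (p.2 - 1) (Xbar1 U0 X0 X1 * p.1)
      ((Xbar1 U0 X0 X1 * p.1)ᵀ) p.2).PosSemidef}

/-- `p(a) = (16a³/(σ̲(Q)²ζ)) (1 + a/σ̲(Q)) (1 + √(a/σ̲(R)))`. -/
def pC (Q : Matrix (Fin n) (Fin n) ℝ) (R : Matrix (Fin m) (Fin m) ℝ) (ζ a : ℝ) : ℝ :=
  16 * a ^ 3 / (sigMin Q ^ 2 * ζ) * (1 + a / sigMin Q) * (1 + Real.sqrt (a / sigMin R))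


section Aux
variable {n m t : ℕ}

lemma smul_fromRows' {m₁ m₂ n : Type*} (c : ℝ) (A : Matrix m₁ n ℝ) (B : Matrix m₂ n ℝ) :
    c • Matrix.fromRows A B = Matrix.fromRows (c • A) (c • B) := by
  ext (i | i) j <;> rfl

lemma Phi_eq_fromRows (U0 : Matrix (Fin m) (Fin t) ℝ) (X0 : Matrix (Fin n) (Fin t) ℝ) :
    Phi U0 X0 = Matrix.fromRows (Ubar U0 X0) (Xbar0 U0 X0) := by
  unfold Phi Ubar Xbar0 Dmat
  rw [Matrix.fromRows_mul, smul_fromRows']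

lemma det_DDt_isUnit (ht : 0 < t) (U0 : Matrix (Fin m) (Fin t) ℝ)
    (X0 : Matrix (Fin n) (Fin t) ℝ) (hPhi : (Phi U0 X0).PosDef) :
    IsUnit (Dmat U0 X0 * (Dmat U0 X0)ᵀ).det := by
  have hc : ((t : ℝ)⁻¹ : ℝ) ≠ 0 := by positivity
  have hdet : (Phi U0 X0).det ≠ 0 := ne_of_gt hPhi.det_pos
  rw [Phi, Matrix.det_smul] at hdet
  exact isUnit_iff_ne_zero.mpr (by
    intro h; apply hdet; rw [h, mul_zero])

lemma Xbar1_mul_Phi_inv (ht : 0 < t) (U0 : Matrix (Fin m) (Fin t) ℝ)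
    (X0 X1 : Matrix (Fin n) (Fin t) ℝ) (hPhi : (Phi U0 X0).PosDef) :
    Xbar1 U0 X0 X1 * (Phi U0 X0)⁻¹ = X1 * pinv (Dmat U0 X0) := by
  have htR : (t : ℝ) ≠ 0 := by positivity
  have hA := det_DDt_isUnit ht U0 X0 hPhi
  have hinv : (Phi U0 X0)⁻¹ = (t : ℝ) • (Dmat U0 X0 * (Dmat U0 X0)ᵀ)⁻¹ := by
    apply Matrix.inv_eq_right_inv
    rw [Phi, Matrix.smul_mul, Matrix.mul_smul, smul_smul, Matrix.mul_nonsing_inv _ hA,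
      inv_mul_cancel₀ htR, one_smul]
  rw [Xbar1, hinv, Matrix.smul_mul, Matrix.mul_smul, smul_smul, inv_mul_cancel₀ htR,
    one_smul, pinv, Matrix.mul_assoc]

lemma Ubar_mul_Phi_inv (ht : 0 < t) (U0 : Matrix (Fin m) (Fin t) ℝ)
    (X0 : Matrix (Fin n) (Fin t) ℝ) (hPhi : (Phi U0 X0).PosDef) :
    Ubar U0 X0 * (Phi U0 X0)⁻¹
      = Matrix.fromCols (1 : Matrix (Fin m) (Fin m) ℝ) (0 : Matrix (Fin m) (Fin n) ℝ) ∧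
    Xbar0 U0 X0 * (Phi U0 X0)⁻¹
      = Matrix.fromCols (0 : Matrix (Fin n) (Fin m) ℝ) (1 : Matrix (Fin n) (Fin n) ℝ) := by
  have hdet : IsUnit (Phi U0 X0).det := isUnit_iff_ne_zero.mpr (ne_of_gt hPhi.det_pos)
  have h1 : Matrix.fromRows (Ubar U0 X0) (Xbar0 U0 X0) * (Phi U0 X0)⁻¹ = 1 := by
    rw [← Phi_eq_fromRows]; exact Matrix.mul_nonsing_inv _ hdet
  rw [Matrix.fromRows_mul, ← Matrix.fromBlocks_one,
    ← Matrix.fromRows_fromCols_eq_fromBlocks] at h1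
  constructor
  · have h2 := congrArg Matrix.toRows₁ h1
    rwa [Matrix.toRows₁_fromRows, Matrix.toRows₁_fromRows] at h2
  · have h2 := congrArg Matrix.toRows₂ h1
    rwa [Matrix.toRows₂_fromRows, Matrix.toRows₂_fromRows] at h2

end Aux

/-- Equivalence between the covariance parameterization of the LQR and the
indirect certainty-equivalence LQR (Lemma 1). -/
theorem stmt_0 {n m t : ℕ} (hn : 0 < n) (hm : 0 < m) (ht : 0 < t)
    (U0 : Matrix (Fin m) (Fin t) ℝ) (X0 X1 : Matrix (Fin n) (Fin t) ℝ)
    (Q : Matrix (Fin n) (Fin n) ℝ) (R : Matrix (Fin m) (Fin m) ℝ)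
    (hQ : Q.PosDef) (hR : R.PosDef)
    (hrank : (Dmat U0 X0).rank = m + n) (hPhi : (Phi U0 X0).PosDef) :
    (∀ K : Matrix (Fin m) (Fin n) ℝ,
        specLt1 (X1 * pinv (Dmat U0 X0) * Matrix.fromRows K (1 : Matrix (Fin n) (Fin n) ℝ)) ↔
          (Phi U0 X0)⁻¹ * Matrix.fromRows K (1 : Matrix (Fin n) (Fin n) ℝ) ∈
            feasSet U0 X0 X1) ∧
    (∀ K : Matrix (Fin m) (Fin n) ℝ,
        specLt1 (X1 * pinv (Dmat U0 X0) * Matrix.fromRows K (1 : Matrix (Fin n) (Fin n) ℝ)) →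
          Matrix.trace ((Q + Kᵀ * R * K) *
              lyap (X1 * pinv (Dmat U0 X0) * Matrix.fromRows K (1 : Matrix (Fin n) (Fin n) ℝ))) =
            Jcost U0 X0 X1 Q R
              ((Phi U0 X0)⁻¹ * Matrix.fromRows K (1 : Matrix (Fin n) (Fin n) ℝ))) ∧
    Jstar U0 X0 X1 Q R =
      sInf ((fun K : Matrix (Fin m) (Fin n) ℝ =>
          Matrix.trace ((Q + Kᵀ * R * K) *
            lyap (X1 * pinv (Dmat U0 X0) * Matrix.fromRows K (1 : Matrix (Fin n) (Fin n) ℝ)))) ''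
        {K | specLt1 (X1 * pinv (Dmat U0 X0) *
            Matrix.fromRows K (1 : Matrix (Fin n) (Fin n) ℝ))}) := by

  obtain ⟨hUΦ, hXΦ⟩ := Ubar_mul_Phi_inv ht U0 X0 hPhi
  have hX1Φ := Xbar1_mul_Phi_inv ht U0 X0 X1 hPhi
  have hdet : IsUnit (Phi U0 X0).det := isUnit_iff_ne_zero.mpr (ne_of_gt hPhi.det_pos)
  have hU : ∀ K : Matrix (Fin m) (Fin n) ℝ,
      Ubar U0 X0 * ((Phi U0 X0)⁻¹ * Matrix.fromRows K (1 : Matrix (Fin n) (Fin n) ℝ)) = K := by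
    intro K
    rw [← Matrix.mul_assoc, hUΦ, Matrix.fromCols_mul_fromRows]
    simp
  have hX0 : ∀ K : Matrix (Fin m) (Fin n) ℝ,
      Xbar0 U0 X0 * ((Phi U0 X0)⁻¹ * Matrix.fromRows K (1 : Matrix (Fin n) (Fin n) ℝ)) = 1 := by
    intro K
    rw [← Matrix.mul_assoc, hXΦ, Matrix.fromCols_mul_fromRows]
    simp
  have hX1 : ∀ K : Matrix (Fin m) (Fin n) ℝ,
      Xbar1 U0 X0 X1 * ((Phi U0 X0)⁻¹ * Matrix.fromRows K (1 : Matrix (Fin n) (Fin n) ℝ))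
        = X1 * pinv (Dmat U0 X0) * Matrix.fromRows K (1 : Matrix (Fin n) (Fin n) ℝ) := by
    intro K; rw [← Matrix.mul_assoc, hX1Φ]
  have part1 : ∀ K : Matrix (Fin m) (Fin n) ℝ,
      specLt1 (X1 * pinv (Dmat U0 X0) * Matrix.fromRows K (1 : Matrix (Fin n) (Fin n) ℝ)) ↔
        (Phi U0 X0)⁻¹ * Matrix.fromRows K (1 : Matrix (Fin n) (Fin n) ℝ) ∈
          feasSet U0 X0 X1 := by
    intro K
    constructor
    · intro h
      exact ⟨hX0 K, by rw [hX1 K]; exact h⟩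
    · rintro ⟨-, h⟩
      rwa [hX1 K] at h
  have part2 : ∀ K : Matrix (Fin m) (Fin n) ℝ,
      specLt1 (X1 * pinv (Dmat U0 X0) * Matrix.fromRows K (1 : Matrix (Fin n) (Fin n) ℝ)) →
        Matrix.trace ((Q + Kᵀ * R * K) *
            lyap (X1 * pinv (Dmat U0 X0) * Matrix.fromRows K (1 : Matrix (Fin n) (Fin n) ℝ))) =
          Jcost U0 X0 X1 Q R
            ((Phi U0 X0)⁻¹ * Matrix.fromRows K (1 : Matrix (Fin n) (Fin n) ℝ)) := by
    intro K _
    set V : Matrix (Fin m ⊕ Fin n) (Fin n) ℝ :=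
      (Phi U0 X0)⁻¹ * Matrix.fromRows K (1 : Matrix (Fin n) (Fin n) ℝ) with hVdef
    have hq : Vᵀ * (Ubar U0 X0)ᵀ * R * Ubar U0 X0 * V = Kᵀ * R * K := by
      rw [Matrix.mul_assoc (Vᵀ * (Ubar U0 X0)ᵀ * R) (Ubar U0 X0) V, hVdef, hU K,
        ← Matrix.transpose_mul (Ubar U0 X0), hU K]
    rw [Jcost, SigV, hq, hVdef, hX1 K]
  refine ⟨part1, part2, ?_⟩
  have himg : Jcost U0 X0 X1 Q R '' feasSet U0 X0 X1 =
      (fun K : Matrix (Fin m) (Fin n) ℝ =>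
          Matrix.trace ((Q + Kᵀ * R * K) *
            lyap (X1 * pinv (Dmat U0 X0) * Matrix.fromRows K (1 : Matrix (Fin n) (Fin n) ℝ)))) ''
        {K | specLt1 (X1 * pinv (Dmat U0 X0) *
            Matrix.fromRows K (1 : Matrix (Fin n) (Fin n) ℝ))} := by
    ext x
    simp only [Set.mem_image, Set.mem_setOf_eq]
    constructor
    · rintro ⟨V, ⟨h0, h1⟩, rfl⟩
      have hrec : (Phi U0 X0)⁻¹ *
          Matrix.fromRows (Ubar U0 X0 * V) (1 : Matrix (Fin n) (Fin n) ℝ) = V := by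
        have hPV : Matrix.fromRows (Ubar U0 X0 * V) (1 : Matrix (Fin n) (Fin n) ℝ)
            = Phi U0 X0 * V := by
          rw [Phi_eq_fromRows, Matrix.fromRows_mul, h0]
        rw [hPV, ← Matrix.mul_assoc, Matrix.nonsing_inv_mul _ hdet, Matrix.one_mul]
      have hfeas : specLt1 (X1 * pinv (Dmat U0 X0) *
          Matrix.fromRows (Ubar U0 X0 * V) (1 : Matrix (Fin n) (Fin n) ℝ)) := by
        rw [← hX1 (Ubar U0 X0 * V), hrec]; exact h1
      refine ⟨Ubar U0 X0 * V, hfeas, ?_⟩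
      rw [part2 _ hfeas, hrec]
    · rintro ⟨K, hK, rfl⟩
      exact ⟨(Phi U0 X0)⁻¹ * Matrix.fromRows K (1 : Matrix (Fin n) (Fin n) ℝ),
        (part1 K).mp hK, (part2 K hK).symm⟩
  rw [Jstar, himg]
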